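/- (Incorrect equilibria are collinear) Consider n = 3 agents in ℝ² with constraints E = {(1,2), (1,3)} and A = {(1,2,3)}, so that F_W(p) = (‖p_1 − p_2‖², ‖p_1 − p_3‖², cos θ¹_{23}(p)) for configurations p = (p_1, p_2, p_3) with p_2 ≠ p_1 and p_3 ≠ p_1. Let c ∈ ℝ³ be any constant target and e(p) = F_W(p) − c. If p satisfies R_W(p)ᵀ e(p) = 0 and e(p) ≠ 0 (i.e., p is an incorrect equilibrium of the gradient flow), then the three points p_1, p_2, p_3 are collinear. -/

import Mathlib

open scoped RealInnerProductSpace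

noncomputable section

/-- A point in `ℝ^d`. -/
abbrev Pt (d : ℕ) : Type := EuclideanSpace ℝ (Fin d)

/-- A configuration of `n` points in `ℝ^d`, identified with `ℝ^{dn}` (Euclidean norm). -/
abbrev Conf (d n : ℕ) : Type := PiLp 2 (fun _ : Fin n => Pt d)

/-- Cosine of the angle at vertex `k` subtended by vertices `i` and `j`. -/
def cosAngle {d n : ℕ} (p : Conf d n) (k i j : Fin n) : ℝ :=
  ⟪p i - p k, p j - p k⟫ / (‖p i - p k‖ * ‖p j - p k‖)

/-- The set `χ` of admissible configurations for the angle set `A`. -/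
def Chi {d n : ℕ} (A : Finset (Fin n × Fin n × Fin n)) : Set (Conf d n) :=
  {p | ∀ a ∈ A, p a.2.1 ≠ p a.1 ∧ p a.2.2 ≠ p a.1}

/-- The weak rigidity function `F_W`. -/
def FW {d n : ℕ} (E : Finset (Fin n × Fin n)) (A : Finset (Fin n × Fin n × Fin n))
    (p : Conf d n) : EuclideanSpace ℝ (↥E ⊕ ↥A) :=
  WithLp.toLp 2 (fun x => Sum.elim (fun e : ↥E => ‖p e.1.1 - p e.1.2‖ ^ 2)
    (fun a : ↥A => cosAngle p a.1.1 a.1.2.1 a.1.2.2) x)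

/-- The weak rigidity matrix `R_W(p)`: Jacobian (Fréchet derivative) of `F_W` at `p`. -/
def RW {d n : ℕ} (E : Finset (Fin n × Fin n)) (A : Finset (Fin n × Fin n × Fin n))
    (p : Conf d n) : Conf d n →L[ℝ] EuclideanSpace ℝ (↥E ⊕ ↥A) :=
  fderiv ℝ (FW E A) p

/-- Rank of the weak rigidity matrix. -/
def rankRW {d n : ℕ} (E : Finset (Fin n × Fin n)) (A : Finset (Fin n × Fin n × Fin n))
    (p : Conf d n) : ℕ :=
  Module.finrank ℝ ↥(LinearMap.range (RW E A p).toLinearMap)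

/-- `J` is skew-symmetric. -/
def IsSkewAdj {d : ℕ} (J : Pt d →ₗ[ℝ] Pt d) : Prop :=
  ∀ x y : Pt d, ⟪J x, y⟫ = - ⟪x, J y⟫

/-- Trivial infinitesimal motions (translations and rotations). -/
def trivialMotions {d n : ℕ} (p : Conf d n) : Set (Conf d n) :=
  {δ | ∃ (v : Pt d) (J : Pt d →ₗ[ℝ] Pt d), IsSkewAdj J ∧ ∀ i, δ i = v + J (p i)}

/-- Trivial infinitesimal motions including scaling. -/
def trivialMotionsScale {d n : ℕ} (p : Conf d n) : Set (Conf d n) :=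
  {δ | ∃ (v : Pt d) (J : Pt d →ₗ[ℝ] Pt d) (c : ℝ),
    IsSkewAdj J ∧ ∀ i, δ i = v + J (p i) + c • p i}

/-- Congruence of two configurations. -/
def ConfCongruent {d n : ℕ} (p q : Conf d n) : Prop :=
  ∀ i j, ‖q i - q j‖ = ‖p i - p j‖

/-- Proportional congruence of two configurations. -/
def PropCongruent {d n : ℕ} (p q : Conf d n) : Prop :=
  ∃ C : ℝ, 0 < C ∧ ∀ i j, ‖q i - q j‖ = C * ‖p i - p j‖

/-- Generalized weak rigidity (case `E ≠ ∅`). -/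
def IsGWR {d n : ℕ} (E : Finset (Fin n × Fin n)) (A : Finset (Fin n × Fin n × Fin n))
    (p : Conf d n) : Prop :=
  ∃ U ∈ nhds p, U ⊆ Chi A ∧ ∀ q ∈ U, FW E A q = FW E A p → ConfCongruent p q

/-- Generalized weak rigidity (case `E = ∅`, up to scaling). -/
def IsGWRScale {d n : ℕ} (E : Finset (Fin n × Fin n)) (A : Finset (Fin n × Fin n × Fin n))
    (p : Conf d n) : Prop :=
  ∃ U ∈ nhds p, U ⊆ Chi A ∧ ∀ q ∈ U, FW E A q = FW E A p → PropCongruent p q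

/-- `p` is a regular point of `F_W`: its rank attains the maximum over `χ`. -/
def IsRegularPt {d n : ℕ} (E : Finset (Fin n × Fin n)) (A : Finset (Fin n × Fin n × Fin n))
    (p : Conf d n) : Prop :=
  p ∈ Chi A ∧ ∀ q ∈ (Chi A : Set (Conf d n)), rankRW E A q ≤ rankRW E A p

/-- The gradient-flow vector field `u(p) = -R_W(p)ᵀ (F_W(p) - c)`. -/
def gradFlowVF {d n : ℕ} (E : Finset (Fin n × Fin n)) (A : Finset (Fin n × Fin n × Fin n))
    (c : EuclideanSpace ℝ (↥E ⊕ ↥A)) (p : Conf d n) : Conf d n :=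
  -(ContinuousLinearMap.adjoint (RW E A p)) (FW E A p - c)

set_option synthInstance.maxHeartbeats 4000000 in
set_option maxHeartbeats 4000000 in
/-- `p : [0,∞) → χ` is a solution of the gradient flow `ṗ = -R_W(p)ᵀ e(p)`. -/
def IsGradFlowSol {d n : ℕ} (E : Finset (Fin n × Fin n)) (A : Finset (Fin n × Fin n × Fin n))
    (c : EuclideanSpace ℝ (↥E ⊕ ↥A)) (p : ℝ → Conf d n) : Prop :=
  (∀ t : ℝ, 0 ≤ t → p t ∈ Chi A) ∧
  ∀ t : ℝ, 0 ≤ t → HasDerivAt p (gradFlowVF E A c (p t)) t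

/-- Centroid of a configuration. -/
def centroid {d n : ℕ} (x : Conf d n) : Pt d := (n : ℝ)⁻¹ • ∑ i, x i

end
/-- The edge set `E = {(1,2), (1,3)}` (agents `1,2,3` indexed by `0,1,2`). -/
def E₃ : Finset (Fin 3 × Fin 3) := {(0, 1), (0, 2)}

/-- The angle set `A = {(1,2,3)}`: the angle at agent `1` subtended by agents `2, 3`. -/
def A₃ : Finset (Fin 3 × Fin 3 × Fin 3) := {(0, 1, 2)}

noncomputable section Stmt17Aux

/-- difference of coordinate projections -/
def dsub (a b : Fin 3) : Conf 2 3 →L[ℝ] Pt 2 :=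
  PiLp.proj (𝕜 := ℝ) 2 (fun _ : Fin 3 => Pt 2) a - PiLp.proj (𝕜 := ℝ) 2 (fun _ : Fin 3 => Pt 2) b

lemma dsub_apply (a b : Fin 3) (δ : Conf 2 3) : dsub a b δ = δ a - δ b := by
  simp [dsub]

lemma hasF_sub (p : Conf 2 3) (a b : Fin 3) :
    HasFDerivAt (fun q : Conf 2 3 => q a - q b) (dsub a b) p :=
  (PiLp.hasFDerivAt_apply (𝕜 := ℝ) 2 p a).sub (PiLp.hasFDerivAt_apply (𝕜 := ℝ) 2 p b)

def innD (p : Conf 2 3) (a b : Fin 3) : Conf 2 3 →L[ℝ] ℝ :=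
  (fderivInnerCLM ℝ (p a - p b, p a - p b)).comp ((dsub a b).prod (dsub a b))

lemma innD_apply (p : Conf 2 3) (a b : Fin 3) (δ : Conf 2 3) :
    innD p a b δ = 2 * ⟪p a - p b, δ a - δ b⟫ := by
  simp [innD, fderivInnerCLM_apply, dsub_apply, real_inner_comm]
  ring

lemma hasF_normsq (p : Conf 2 3) (a b : Fin 3) :
    HasFDerivAt (fun q : Conf 2 3 => ‖q a - q b‖ ^ 2) (innD p a b) p := by
  have h := (hasF_sub p a b).inner ℝ (hasF_sub p a b)
  simp only [real_inner_self_eq_norm_sq] at h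
  exact h

def normD (p : Conf 2 3) (a b : Fin 3) : Conf 2 3 →L[ℝ] ℝ :=
  (1 / (2 * ‖p a - p b‖)) • innD p a b

lemma hasF_norm (p : Conf 2 3) (a b : Fin 3) (h : p a - p b ≠ 0) :
    HasFDerivAt (fun q : Conf 2 3 => ‖q a - q b‖) (normD p a b) p := by
  have hne : (‖p a - p b‖ ^ 2) ≠ 0 := pow_ne_zero _ (norm_ne_zero_iff.2 h)
  have h2 := (hasF_normsq p a b).sqrt hne
  simp only [Real.sqrt_sq, norm_nonneg] at h2
  exact h2

def cosD (p : Conf 2 3) (k i j : Fin 3) : Conf 2 3 →L[ℝ] ℝ :=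
  ⟪p i - p k, p j - p k⟫ • ((-((‖p i - p k‖ * ‖p j - p k‖) ^ 2)⁻¹) •
      (‖p i - p k‖ • normD p j k + ‖p j - p k‖ • normD p i k))
    + (‖p i - p k‖ * ‖p j - p k‖)⁻¹ •
      ((fderivInnerCLM ℝ (p i - p k, p j - p k)).comp ((dsub i k).prod (dsub j k)))

lemma hasF_cos (p : Conf 2 3) (k i j : Fin 3) (hi : p i ≠ p k) (hj : p j ≠ p k) :
    HasFDerivAt (fun q : Conf 2 3 => cosAngle q k i j) (cosD p k i j) p := by
  have hu : p i - p k ≠ 0 := sub_ne_zero.2 hi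
  have hv : p j - p k ≠ 0 := sub_ne_zero.2 hj
  have hN := (hasF_sub p i k).inner ℝ (hasF_sub p j k)
  have hD := (hasF_norm p i k hu).mul (hasF_norm p j k hv)
  have hD0 : ‖p i - p k‖ * ‖p j - p k‖ ≠ 0 :=
    mul_ne_zero (norm_ne_zero_iff.2 hu) (norm_ne_zero_iff.2 hv)
  have hInv := (hasDerivAt_inv hD0).comp_hasFDerivAt p hD
  have h := hN.mul hInv
  simpa [cosAngle, cosD, div_eq_mul_inv, Function.comp, Pi.mul_def] using h

lemma innD_apply' (p : Conf 2 3) (a b : Fin 3) (δ : Conf 2 3) :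
    innD p a b δ = 2 * ⟪p b - p a, δ b - δ a⟫ := by
  rw [innD_apply]
  congr 1
  rw [← neg_sub (p b) (p a), ← neg_sub (δ b) (δ a), inner_neg_neg]

lemma cosD_apply (p : Conf 2 3) (k i j : Fin 3) (δ : Conf 2 3) :
    cosD p k i j δ =
      ⟪p i - p k, p j - p k⟫ * (-(((‖p i - p k‖ * ‖p j - p k‖) ^ 2)⁻¹) *
        (‖p i - p k‖ * ((1 / (2 * ‖p j - p k‖)) * (2 * ⟪p j - p k, δ j - δ k⟫))
          + ‖p j - p k‖ * ((1 / (2 * ‖p i - p k‖)) * (2 * ⟪p i - p k, δ i - δ k⟫))))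
      + (‖p i - p k‖ * ‖p j - p k‖)⁻¹ *
        (⟪p i - p k, δ j - δ k⟫ + ⟪δ i - δ k, p j - p k⟫) := by
  simp [cosD, normD, innD_apply, dsub_apply, fderivInnerCLM_apply]
  ring

lemma not_collinear_indep {q0 q1 q2 : Pt 2}
    (h : ¬ Collinear ℝ ({q0, q1, q2} : Set (Pt 2))) :
    ∀ a b : ℝ, a • (q1 - q0) + b • (q2 - q0) = 0 → a = 0 ∧ b = 0 := by
  intro a b hab
  by_contra hcon
  apply h
  rcases eq_or_ne b 0 with hb | hb
  · subst hb
    have ha : a ≠ 0 := by tauto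
    have h10 : q1 - q0 = 0 := by
      have h' : a • (q1 - q0) = 0 := by simpa using hab
      rcases smul_eq_zero.1 h' with h'' | h''
      · exact absurd h'' ha
      · exact h''
    have hq : q1 = q0 := by
      have := sub_eq_zero.1 h10; exact this
    rw [hq]
    have : ({q0, q0, q2} : Set (Pt 2)) = {q0, q2} := by
      simp [Set.insert_comm]
    rw [this]
    exact collinear_pair ℝ q0 q2
  · rw [collinear_iff_of_mem (Set.mem_insert q0 _)]
    refine ⟨q1 - q0, ?_⟩
    intro x hx
    rcases hx with h | h | h
    · exact ⟨0, by rw [h]; simp⟩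
    · exact ⟨1, by rw [h]; simp⟩
    · refine ⟨-a / b, ?_⟩
      have h2 : q2 - q0 = (-a / b) • (q1 - q0) := by
        have h' : b • (q2 - q0) = (-a) • (q1 - q0) := by
          linear_combination (norm := module) hab
        calc q2 - q0 = b⁻¹ • (b • (q2 - q0)) := by rw [smul_smul, inv_mul_cancel₀ hb, one_smul]
        _ = b⁻¹ • ((-a) • (q1 - q0)) := by rw [h']
        _ = (-a / b) • (q1 - q0) := by rw [smul_smul, div_eq_mul_inv, mul_comm]
      rw [h]
      rw [eq_comm]
      calc (-a / b) • (q1 - q0) +ᵥ q0 = (q2 - q0) + q0 := by rw [← h2]; rfl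
      _ = q2 := by abel
  
end Stmt17Aux


set_option synthInstance.maxHeartbeats 400000 in
set_option maxHeartbeats 1000000 in
/-- for the 3-agent formation in `ℝ²` with constraints `E₃`, `A₃`, every
incorrect equilibrium of the gradient flow (`R_W(p)ᵀ e(p) = 0`, `e(p) ≠ 0`) is collinear. -/
theorem stmt17 (c : EuclideanSpace ℝ (↥E₃ ⊕ ↥A₃)) (p : Conf 2 3)
    (hp : p ∈ Chi A₃)
    (heq : (ContinuousLinearMap.adjoint (RW E₃ A₃ p)) (FW E₃ A₃ p - c) = 0)
    (hne : FW E₃ A₃ p - c ≠ 0) :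
    Collinear ℝ ({p 0, p 1, p 2} : Set (Pt 2)) := by
  classical
  obtain ⟨h1, h2⟩ := hp (0, 1, 2) (by decide)
  set φ' : (↥E₃ ⊕ ↥A₃) → (Conf 2 3 →L[ℝ] ℝ) :=
    Sum.elim (fun e : ↥E₃ => innD p e.1.1 e.1.2)
      (fun a : ↥A₃ => cosD p a.1.1 a.1.2.1 a.1.2.2) with hφ'
  set Φ' : Conf 2 3 →L[ℝ] EuclideanSpace ℝ (↥E₃ ⊕ ↥A₃) :=
    ((PiLp.continuousLinearEquiv 2 ℝ (fun _ : ↥E₃ ⊕ ↥A₃ => ℝ)).symm.toContinuousLinearMap).comp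
      (ContinuousLinearMap.pi φ') with hΦ'
  have hFW : HasFDerivAt (FW E₃ A₃) Φ' p := by
    rw [← hasFDerivWithinAt_univ, hasFDerivWithinAt_piLp]
    intro x
    have hproj : (PiLp.proj (𝕜 := ℝ) 2 (fun _ : ↥E₃ ⊕ ↥A₃ => ℝ) x).comp Φ' = φ' x := by
      ext δ
      simp [hΦ']
    rw [hproj]
    cases x with
    | inl e => simpa [FW, hφ'] using (hasF_normsq p e.1.1 e.1.2)
    | inr a =>
      have ha : a.1 = ((0 : Fin 3), (1 : Fin 3), (2 : Fin 3)) := by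
        exact Finset.mem_singleton.1 a.2
      have hi : p a.1.2.1 ≠ p a.1.1 := by rw [ha]; exact h1
      have hj : p a.1.2.2 ≠ p a.1.1 := by rw [ha]; exact h2
      simpa [FW, hφ'] using (hasF_cos p a.1.1 a.1.2.1 a.1.2.2 hi hj)
  have hRW : RW E₃ A₃ p = Φ' := hFW.fderiv
  set e' := FW E₃ A₃ p - c with he'
  have key : ∀ δ : Conf 2 3, ⟪e', Φ' δ⟫ = 0 := by
    intro δ
    rw [← hRW, ← ContinuousLinearMap.adjoint_inner_left, heq, inner_zero_left]
  set ee1 : ↥E₃ := ⟨((0 : Fin 3), (1 : Fin 3)), by decide⟩ with hee1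
  set ee2 : ↥E₃ := ⟨((0 : Fin 3), (2 : Fin 3)), by decide⟩ with hee2
  set aa : ↥A₃ := ⟨((0 : Fin 3), (1 : Fin 3), (2 : Fin 3)), by decide⟩ with haa
  have hunivE : (Finset.univ : Finset ↥E₃) = {ee1, ee2} := by decide
  have hunivA : (Finset.univ : Finset ↥A₃) = {aa} := by decide
  set E1 := e' (Sum.inl ee1) with hE1
  set E2 := e' (Sum.inl ee2) with hE2
  set E3 := e' (Sum.inr aa) with hE3
  have hsum : ∀ δ : Conf 2 3,
      E1 * innD p 0 1 δ + E2 * innD p 0 2 δ + E3 * cosD p 0 1 2 δ = 0 := by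
    intro δ
    have h := key δ
    rw [PiLp.inner_apply, Fintype.sum_sum_type, hunivE, hunivA,
      Finset.sum_insert (by decide), Finset.sum_singleton, Finset.sum_singleton] at h
    have k1 : φ' (Sum.inl ee1) = innD p 0 1 := rfl
    have k2 : φ' (Sum.inl ee2) = innD p 0 2 := rfl
    have k3 : φ' (Sum.inr aa) = cosD p 0 1 2 := rfl
    simp [hΦ', RCLike.inner_apply, starRingEnd_apply, star_trivial, add_assoc] at h
    rw [k1, k2, k3, ← hE1, ← hE2, ← hE3] at h
    linear_combination h
  by_contra hcol
  have hind := not_collinear_indep hcol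
  have hnu : ‖p 1 - p 0‖ ≠ 0 := norm_ne_zero_iff.2 (sub_ne_zero.2 h1)
  have hnv : ‖p 2 - p 0‖ ≠ 0 := norm_ne_zero_iff.2 (sub_ne_zero.2 h2)
  have eq1 : ∀ w : Pt 2,
      (2 * E1 * ‖p 1 - p 0‖ ^ 3 * ‖p 2 - p 0‖ - E3 * ⟪p 1 - p 0, p 2 - p 0⟫) * ⟪p 1 - p 0, w⟫
        + (E3 * ‖p 1 - p 0‖ ^ 2) * ⟪p 2 - p 0, w⟫ = 0 := by
    intro w
    set δ : Conf 2 3 := WithLp.toLp 2 ![0, w, 0] with hδ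
    have hd0 : δ 0 = 0 := by simp [hδ]
    have hd1 : δ 1 = w := by simp [hδ]
    have hd2 : δ 2 = 0 := by simp [hδ]
    have h := hsum δ
    rw [innD_apply' p 0 1, innD_apply' p 0 2, cosD_apply, hd0, hd1, hd2] at h
    simp only [sub_zero, sub_self, inner_zero_right, inner_zero_left, mul_zero, zero_mul,
      add_zero, zero_add, mul_one, one_mul] at h
    rw [real_inner_comm (p 2 - p 0) w] at h
    set x := ⟪p 1 - p 0, w⟫ with hx
    set y := ⟪p 2 - p 0, w⟫ with hy
    set z := ⟪p 1 - p 0, p 2 - p 0⟫ with hz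
    set nu := ‖p 1 - p 0‖ with hnud
    set nv := ‖p 2 - p 0‖ with hnvd
    field_simp at h
    have h3 : (2*nu*nv^2) * ((2*E1*nu^3*nv - E3*z) * x + (E3*nu^2) * y) = 0 := by
      linear_combination (2*nu*nv^2) * h
    have h4 := (mul_eq_zero.1 h3).resolve_left
      (mul_ne_zero (mul_ne_zero two_ne_zero hnu) (pow_ne_zero 2 hnv))
    linear_combination h4
  have eq2 : ∀ w : Pt 2,
      (E3 * ‖p 2 - p 0‖ ^ 2) * ⟪p 1 - p 0, w⟫
        + (2 * E2 * ‖p 1 - p 0‖ * ‖p 2 - p 0‖ ^ 3 - E3 * ⟪p 1 - p 0, p 2 - p 0⟫) * ⟪p 2 - p 0, w⟫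
        = 0 := by
    intro w
    set δ : Conf 2 3 := WithLp.toLp 2 ![0, 0, w] with hδ
    have hd0 : δ 0 = 0 := by simp [hδ]
    have hd1 : δ 1 = 0 := by simp [hδ]
    have hd2 : δ 2 = w := by simp [hδ]
    have h := hsum δ
    rw [innD_apply' p 0 1, innD_apply' p 0 2, cosD_apply, hd0, hd1, hd2] at h
    simp only [sub_zero, sub_self, inner_zero_right, inner_zero_left, mul_zero, zero_mul,
      add_zero, zero_add, mul_one, one_mul] at h
    set x := ⟪p 1 - p 0, w⟫ with hx
    set y := ⟪p 2 - p 0, w⟫ with hy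
    set z := ⟪p 1 - p 0, p 2 - p 0⟫ with hz
    set nu := ‖p 1 - p 0‖ with hnud
    set nv := ‖p 2 - p 0‖ with hnvd
    field_simp at h
    have h3 : (2*nu^2*nv) * ((E3*nv^2) * x + (2*E2*nu*nv^3 - E3*z) * y) = 0 := by
      linear_combination (2*nu^2*nv) * h
    have h4 := (mul_eq_zero.1 h3).resolve_left
      (mul_ne_zero (mul_ne_zero two_ne_zero (pow_ne_zero 2 hnu)) hnv)
    linear_combination h4
  set A1 := 2 * E1 * ‖p 1 - p 0‖ ^ 3 * ‖p 2 - p 0‖ - E3 * ⟪p 1 - p 0, p 2 - p 0⟫ with hA1d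
  set B1 := E3 * ‖p 1 - p 0‖ ^ 2 with hB1d
  have hz1 : A1 • (p 1 - p 0) + B1 • (p 2 - p 0) = 0 := by
    have h := eq1 (A1 • (p 1 - p 0) + B1 • (p 2 - p 0))
    have h' : ⟪A1 • (p 1 - p 0) + B1 • (p 2 - p 0),
        A1 • (p 1 - p 0) + B1 • (p 2 - p 0)⟫ = 0 := by
      rw [inner_add_left, real_inner_smul_left, real_inner_smul_left]
      exact h
    exact inner_self_eq_zero.1 h'
  obtain ⟨hA1, hB1⟩ := hind A1 B1 hz1
  have hE3 : E3 = 0 := by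
    rw [hB1d] at hB1
    exact (mul_eq_zero.1 hB1).resolve_right (pow_ne_zero 2 hnu)
  have hE1z : E1 = 0 := by
    rw [hA1d, hE3] at hA1
    have h3 : (2 * (‖p 1 - p 0‖ ^ 3 * ‖p 2 - p 0‖)) * E1 = 0 := by linear_combination hA1
    exact (mul_eq_zero.1 h3).resolve_left
      (mul_ne_zero two_ne_zero (mul_ne_zero (pow_ne_zero 3 hnu) hnv))
  set A2 := 2 * E2 * ‖p 1 - p 0‖ * ‖p 2 - p 0‖ ^ 3 - E3 * ⟪p 1 - p 0, p 2 - p 0⟫ with hA2d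
  set B2 := E3 * ‖p 2 - p 0‖ ^ 2 with hB2d
  have hz2 : B2 • (p 1 - p 0) + A2 • (p 2 - p 0) = 0 := by
    have h := eq2 (B2 • (p 1 - p 0) + A2 • (p 2 - p 0))
    have h' : ⟪B2 • (p 1 - p 0) + A2 • (p 2 - p 0),
        B2 • (p 1 - p 0) + A2 • (p 2 - p 0)⟫ = 0 := by
      rw [inner_add_left, real_inner_smul_left, real_inner_smul_left]
      exact h
    exact inner_self_eq_zero.1 h'
  obtain ⟨hB2, hA2⟩ := hind B2 A2 hz2
  have hE2z : E2 = 0 := by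
    rw [hA2d, hE3] at hA2
    have h3 : (2 * (‖p 1 - p 0‖ * ‖p 2 - p 0‖ ^ 3)) * E2 = 0 := by linear_combination hA2
    exact (mul_eq_zero.1 h3).resolve_left
      (mul_ne_zero two_ne_zero (mul_ne_zero hnu (pow_ne_zero 3 hnv)))
  have hzero : e' = 0 := by
    refine PiLp.ext (fun x => ?_)
    have hx0 : (0 : EuclideanSpace ℝ (↥E₃ ⊕ ↥A₃)) x = 0 := rfl
    rw [hx0]
    cases x with
    | inl e =>
      rcases Finset.mem_insert.1 e.2 with h | h
      · have he : e = ee1 := Subtype.ext h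
        rw [he, ← hE1]
        exact hE1z
      · have he : e = ee2 := Subtype.ext (Finset.mem_singleton.1 h)
        rw [he, ← hE2]
        exact hE2z
    | inr a =>
      have he : a = aa := Subtype.ext (Finset.mem_singleton.1 a.2)
      rw [he]
      exact hE3
  exact absurd hzero hne
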